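/- arXiv:1303.6935 — 3 statements merged into one kernel-verified Lean document; each statement's English description precedes it below -/
import Mathlib

section
/- If B is a symmetric positive definite p×p matrix, s, t ∈ ℝ^p satisfy sᵀt > 0 and Bs ≠ 0 scaled appropriately (i.e., s ≠ 0), then the BFGS update B' = B − (B s sᵀ B)/(sᵀ B s) + (t tᵀ)/(tᵀ s) is symmetric positive definite. -/
open Matrix

lemma vecMulVec_mulVec_aux {p : ℕ} (w v x : Fin p → ℝ) :
    Matrix.vecMulVec w v *ᵥ x = (v ⬝ᵥ x) • w := by
  ext i
  simp only [Matrix.mulVec, dotProduct, Matrix.vecMulVec_apply, Pi.smul_apply, smul_eq_mul,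
    Finset.sum_mul]
  exact Finset.sum_congr rfl fun j _ => by ring

/-- The BFGS update of a symmetric positive definite matrix with a pair `(s,t)` satisfying
`sᵀt > 0` and `s ≠ 0` is symmetric positive definite. -/
theorem bfgs_update_posDef {p : ℕ} (B : Matrix (Fin p) (Fin p) ℝ) (hB : B.PosDef)
    (s t : Fin p → ℝ) (hs : s ≠ 0) (hst : 0 < s ⬝ᵥ t) :
    (B - (s ⬝ᵥ (B *ᵥ s))⁻¹ • Matrix.vecMulVec (B *ᵥ s) (B *ᵥ s)
        + (t ⬝ᵥ s)⁻¹ • Matrix.vecMulVec t t).PosDef := by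
  obtain ⟨hBh, hBp⟩ := Matrix.posDef_iff_dotProduct_mulVec.mp hB
  have hBt : Bᵀ = B := by
    have := hBh.eq
    rwa [Matrix.conjTranspose_eq_transpose_of_trivial] at this
  have hsymm : ∀ x y : Fin p → ℝ, x ⬝ᵥ B *ᵥ y = y ⬝ᵥ B *ᵥ x := by
    intro x y
    rw [Matrix.dotProduct_mulVec, ← Matrix.mulVec_transpose, hBt, dotProduct_comm]
  have hpos : ∀ x : Fin p → ℝ, x ≠ 0 → 0 < x ⬝ᵥ B *ᵥ x := by
    intro x hx
    simpa using hBp (x := x) hx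
  have hnn : ∀ x : Fin p → ℝ, 0 ≤ x ⬝ᵥ B *ᵥ x := by
    intro x
    by_cases hx : x = 0
    · simp [hx]
    · exact (hpos x hx).le
  set a : ℝ := s ⬝ᵥ (B *ᵥ s) with ha_def
  have ha : 0 < a := hpos s hs
  have hc : 0 < t ⬝ᵥ s := by rwa [dotProduct_comm]
  rw [Matrix.posDef_iff_dotProduct_mulVec]
  constructor
  · -- Hermitian
    have h1 : (Matrix.vecMulVec (B *ᵥ s) (B *ᵥ s))ᵀ = Matrix.vecMulVec (B *ᵥ s) (B *ᵥ s) := by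
      ext i j
      simp [Matrix.vecMulVec_apply, mul_comm]
    have h2 : (Matrix.vecMulVec t t)ᵀ = Matrix.vecMulVec t t := by
      ext i j
      simp [Matrix.vecMulVec_apply, mul_comm]
    rw [Matrix.IsHermitian, Matrix.conjTranspose_eq_transpose_of_trivial]
    simp [Matrix.transpose_add, Matrix.transpose_sub, Matrix.transpose_smul, h1, h2, hBt]
  · intro x hx
    have hx' : x ≠ 0 := hx
    set b : ℝ := x ⬝ᵥ (B *ᵥ s) with hb_def
    set q : ℝ := x ⬝ᵥ (B *ᵥ x) with hq_def
    -- expand the quadratic form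
    have hexp : star x ⬝ᵥ ((B - a⁻¹ • Matrix.vecMulVec (B *ᵥ s) (B *ᵥ s)
        + (t ⬝ᵥ s)⁻¹ • Matrix.vecMulVec t t) *ᵥ x)
        = q - a⁻¹ * b ^ 2 + (t ⬝ᵥ s)⁻¹ * (t ⬝ᵥ x) ^ 2 := by
      have hsx : (B *ᵥ s) ⬝ᵥ x = b := by rw [dotProduct_comm]
      simp only [star_trivial, Matrix.add_mulVec, Matrix.sub_mulVec,
        Matrix.smul_mulVec, vecMulVec_mulVec_aux, dotProduct_add, dotProduct_sub,
        dotProduct_smul, smul_eq_mul, hsx]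
      rw [← hq_def, ← hb_def, dotProduct_comm x t]
      ring
    rw [hexp]
    -- Cauchy–Schwarz via y = x - (b/a) • s
    set y : Fin p → ℝ := x - (b / a) • s with hy_def
    have hyq : y ⬝ᵥ (B *ᵥ y) = q - a⁻¹ * b ^ 2 := by
      have h1 : s ⬝ᵥ (B *ᵥ x) = b := hsymm s x ▸ rfl
      simp only [hy_def, Matrix.mulVec_sub, Matrix.mulVec_smul, dotProduct_sub,
        sub_dotProduct, smul_dotProduct, dotProduct_smul, smul_eq_mul,
        ← hq_def, ← hb_def, ← ha_def, h1]
      field_simp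
      ring
    by_cases hy : y = 0
    · -- x = (b/a) • s, so t ⬝ᵥ x ≠ 0
      have hxs : x = (b / a) • s := by
        have := sub_eq_zero.mp (hy_def ▸ hy)
        exact this
      have hba : b / a ≠ 0 := by
        intro h
        apply hx'
        rw [hxs, h, zero_smul]
      have htx : t ⬝ᵥ x = (b / a) * (t ⬝ᵥ s) := by
        rw [hxs]; simp [dotProduct_smul]
      have h1 : 0 ≤ q - a⁻¹ * b ^ 2 := by rw [← hyq]; exact hnn y
      have h2 : 0 < (t ⬝ᵥ s)⁻¹ * (t ⬝ᵥ x) ^ 2 := by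
        apply mul_pos (inv_pos.mpr hc)
        rw [htx]
        positivity
      linarith
    · have h1 : 0 < q - a⁻¹ * b ^ 2 := by rw [← hyq]; exact hpos y hy
      have h2 : 0 ≤ (t ⬝ᵥ s)⁻¹ * (t ⬝ᵥ x) ^ 2 := by positivity
      linarith
end

section
/- Let d minimize the model g(d) = ∇L(w)ᵀ d + (1/2) dᵀ B d + λ‖w + d‖₁ over ℝ^p, where B is symmetric positive definite. If d ≠ 0 then Δ := ∇L(w)ᵀ d + λ‖w + d‖₁ − λ‖w‖₁ satisfies Δ ≤ −dᵀ B d < 0 (the model direction is a descent direction for F). -/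
open Matrix

/-- If `d ≠ 0` minimizes the model `g(d) = ∇Lᵀd + (1/2)dᵀBd + λ‖w+d‖₁` with `B` symmetric
positive definite, then `Δ = ∇Lᵀd + λ‖w+d‖₁ - λ‖w‖₁ ≤ -dᵀBd < 0`. -/
theorem model_minimizer_descent {p : ℕ} (lam : ℝ) (hlam : 0 < lam)
    (gl w : Fin p → ℝ) (B : Matrix (Fin p) (Fin p) ℝ) (hB : B.PosDef)
    (d : Fin p → ℝ)
    (hmin : ∀ d', gl ⬝ᵥ d + (1 / 2) * (d ⬝ᵥ (B *ᵥ d)) + lam * ∑ j, |w j + d j|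
        ≤ gl ⬝ᵥ d' + (1 / 2) * (d' ⬝ᵥ (B *ᵥ d')) + lam * ∑ j, |w j + d' j|)
    (hd : d ≠ 0) :
    gl ⬝ᵥ d + lam * ∑ j, |w j + d j| - lam * ∑ j, |w j| ≤ -(d ⬝ᵥ (B *ᵥ d)) ∧
      -(d ⬝ᵥ (B *ᵥ d)) < 0 := by
  set q : ℝ := d ⬝ᵥ (B *ᵥ d) with hqdef
  have hq : 0 < q := by
    have := hB.dotProduct_mulVec_pos hd
    simpa [hqdef] using this
  constructor
  · -- key estimate for every t ∈ [0,1)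
    have key : ∀ t : ℝ, 0 ≤ t → t < 1 →
        gl ⬝ᵥ d + lam * ∑ j, |w j + d j| - lam * ∑ j, |w j| + q ≤ (1 - t) / 2 * q := by
      intro t ht0 ht1
      have hmt := hmin (t • d)
      have hdot : gl ⬝ᵥ (t • d) = t * (gl ⬝ᵥ d) := by
        simp [dotProduct_smul]
      have hquad : (t • d) ⬝ᵥ (B *ᵥ (t • d)) = t * t * q := by
        simp [mulVec_smul, smul_dotProduct, dotProduct_smul, hqdef]
        ring
      have habs : ∑ j, |w j + (t • d) j| ≤ (1 - t) * ∑ j, |w j| + t * ∑ j, |w j + d j| := by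
        have h1 : ∀ j, |w j + (t • d) j| ≤ (1 - t) * |w j| + t * |w j + d j| := by
          intro j
          have : w j + (t • d) j = (1 - t) * (w j) + t * (w j + d j) := by
            simp [Pi.smul_apply, smul_eq_mul]; ring
          rw [this]
          calc |(1 - t) * w j + t * (w j + d j)|
              ≤ |(1 - t) * w j| + |t * (w j + d j)| := abs_add_le _ _
            _ = (1 - t) * |w j| + t * |w j + d j| := by
                rw [abs_mul, abs_mul, abs_of_nonneg (by linarith), abs_of_nonneg ht0]
        calc ∑ j, |w j + (t • d) j| ≤ ∑ j, ((1 - t) * |w j| + t * |w j + d j|) :=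
              Finset.sum_le_sum fun j _ => h1 j
          _ = (1 - t) * ∑ j, |w j| + t * ∑ j, |w j + d j| := by
              rw [Finset.sum_add_distrib, Finset.mul_sum, Finset.mul_sum]
      rw [hdot, hquad] at hmt
      have hlam' : lam * ∑ j, |w j + (t • d) j|
          ≤ lam * ((1 - t) * ∑ j, |w j| + t * ∑ j, |w j + d j|) :=
        mul_le_mul_of_nonneg_left habs hlam.le
      have h2 : gl ⬝ᵥ d + 1 / 2 * q + lam * ∑ j, |w j + d j|
          ≤ t * (gl ⬝ᵥ d) + 1 / 2 * (t * t * q)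
            + lam * ((1 - t) * ∑ j, |w j| + t * ∑ j, |w j + d j|) := by linarith
      have h1t : 0 < 1 - t := by linarith
      -- from h2: (1-t)*(gl⬝d + λ∑|w+d| - λ∑|w|) ≤ (t²-1)/2 q = -(1-t)(1+t)/2 q
      nlinarith [mul_pos h1t hq, sq_nonneg (1 - t), sq_nonneg t]
    by_contra hcon
    push_neg at hcon
    set Δ : ℝ := gl ⬝ᵥ d + lam * ∑ j, |w j + d j| - lam * ∑ j, |w j| with hΔ
    have hε : 0 < Δ + q := by linarith
    rcases le_or_gt 1 ((Δ + q) / q) with h | h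
    · have hkey := key 0 le_rfl (by norm_num)
      have : q ≤ Δ + q := by
        have := (one_le_div hq).mp h
        linarith
      linarith [hkey]
    · have ht0 : 0 ≤ 1 - (Δ + q) / q := by linarith
      have ht1 : 1 - (Δ + q) / q < 1 := by
        have : 0 < (Δ + q) / q := div_pos hε hq
        linarith
      have hkey := key _ ht0 ht1
      have : (1 - (1 - (Δ + q) / q)) / 2 * q = (Δ + q) / 2 := by
        field_simp
        ring
      rw [this] at hkey
      linarith
  · linarith
end

section
/- Armijo line search terminates: if L has a Lipschitz continuous gradient with constant M, d ≠ 0 satisfies Δ = ∇L(w)ᵀd + λ‖w+d‖₁ − λ‖w‖₁ < 0, and 0 < σ < 1, then for all sufficiently small α ∈ (0,1], F(w + αd) ≤ F(w) + σαΔ, where F(w) = λ‖w‖₁ + L(w). -/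
open InnerProductSpace Metric

/-- Descent bound (non-sharp constant): `L(w+αd) ≤ L(w) + α⟪g w, d⟫ + M α² ‖d‖²`. -/
lemma descent_bound {p : ℕ} (M : ℝ) (hM : 0 ≤ M)
    (L : EuclideanSpace ℝ (Fin p) → ℝ)
    (g : EuclideanSpace ℝ (Fin p) → EuclideanSpace ℝ (Fin p))
    (hg : ∀ x, HasGradientAt L (g x) x)
    (hLip : ∀ x y, ‖g x - g y‖ ≤ M * ‖x - y‖)
    (w d : EuclideanSpace ℝ (Fin p)) (α : ℝ) (hα : 0 ≤ α) :
    L (w + α • d) ≤ L w + α * (inner ℝ (g w) d : ℝ) + M * α ^ 2 * ‖d‖ ^ 2 := by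
  set f : EuclideanSpace ℝ (Fin p) → ℝ := fun x => L x - (inner ℝ (g w) x : ℝ) with hf
  set f' : EuclideanSpace ℝ (Fin p) → (EuclideanSpace ℝ (Fin p) →L[ℝ] ℝ) :=
    fun x => (toDual ℝ _ (g x) : _ →L[ℝ] ℝ) - innerSL ℝ (g w) with hf'
  set s := closedBall w (α * ‖d‖) with hs
  have hmem : w + α • d ∈ s := by
    simp [hs, dist_eq_norm, norm_smul, abs_of_nonneg hα]
  have hwmem : w ∈ s := by
    simp [hs, dist_eq_norm]
    positivity
  have hderiv : ∀ x ∈ s, HasFDerivWithinAt f (f' x) s x := by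
    intro x _
    exact (((hg x).hasFDerivAt).sub ((innerSL ℝ (g w)).hasFDerivAt)).hasFDerivWithinAt
  have hbound : ∀ x ∈ s, ‖f' x‖ ≤ M * (α * ‖d‖) := by
    intro x hx
    have : f' x = (toDual ℝ (EuclideanSpace ℝ (Fin p))) (g x - g w) := by
      simp [hf', map_sub]
      rfl
    rw [this, (toDual ℝ _).norm_map]
    calc ‖g x - g w‖ ≤ M * ‖x - w‖ := hLip x w
      _ ≤ M * (α * ‖d‖) :=
          mul_le_mul_of_nonneg_left (mem_closedBall_iff_norm.mp hx) hM
  have key := (convex_closedBall w (α * ‖d‖)).norm_image_sub_le_of_norm_hasFDerivWithin_le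
    hderiv hbound hwmem hmem
  have hsub : (w + α • d) - w = α • d := by abel
  rw [hsub] at key
  have hnorm : ‖α • d‖ = α * ‖d‖ := by rw [norm_smul, Real.norm_eq_abs, abs_of_nonneg hα]
  have hfval : f (w + α • d) - f w
      = L (w + α • d) - L w - α * (inner ℝ (g w) d : ℝ) := by
    simp only [hf, inner_add_right, inner_smul_right, real_inner_comm]
    ring
  rw [hnorm, Real.norm_eq_abs] at key
  have key' := (abs_le.mp key).2
  nlinarith [key', hfval]

/-- Armijo line search terminates: if `∇L` is `M`-Lipschitz, `d ≠ 0` with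
`Δ = ∇L(w)ᵀd + λ‖w+d‖₁ - λ‖w‖₁ < 0` and `0 < σ < 1`, then for all sufficiently small
`α ∈ (0,1]`, `F(w + αd) ≤ F(w) + σαΔ`. -/
theorem armijo_line_search_terminates {p : ℕ} (lam M σ : ℝ)
    (hlam : 0 < lam) (hσ0 : 0 < σ) (hσ1 : σ < 1)
    (L : EuclideanSpace ℝ (Fin p) → ℝ)
    (g : EuclideanSpace ℝ (Fin p) → EuclideanSpace ℝ (Fin p))
    (hg : ∀ x, HasGradientAt L (g x) x)
    (hLip : ∀ x y, ‖g x - g y‖ ≤ M * ‖x - y‖)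
    (w d : EuclideanSpace ℝ (Fin p)) (hd : d ≠ 0) (Δ : ℝ)
    (hΔdef : Δ = (inner ℝ (g w) d : ℝ) + lam * ∑ j, |w j + d j| - lam * ∑ j, |w j|)
    (hΔ : Δ < 0) :
    ∃ α₀ > (0 : ℝ), ∀ α : ℝ, 0 < α → α ≤ α₀ → α ≤ 1 →
      lam * ∑ j, |w j + α * d j| + L (w + α • d)
        ≤ lam * ∑ j, |w j| + L w + σ * α * Δ := by
  have hM : 0 ≤ M := by
    have h := hLip w (w + d)
    have : w - (w + d) = -d := by abel
    rw [this, norm_neg] at h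
    have hdpos : 0 < ‖d‖ := norm_pos_iff.mpr hd
    nlinarith [norm_nonneg (g w - g (w + d))]
  have hdenom : 0 < M * ‖d‖ ^ 2 + 1 := by positivity
  refine ⟨min 1 ((1 - σ) * (-Δ) / (M * ‖d‖ ^ 2 + 1)), ?_, ?_⟩
  · apply lt_min one_pos
    apply div_pos (by nlinarith) hdenom
  intro α hα0 hαle hα1
  have hαle2 : α ≤ (1 - σ) * (-Δ) / (M * ‖d‖ ^ 2 + 1) := le_trans hαle (min_le_right _ _)
  -- ℓ¹ convexity
  have hl1 : ∑ j, |w j + α * d j| ≤ (1 - α) * ∑ j, |w j| + α * ∑ j, |w j + d j| := by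
    rw [Finset.mul_sum, Finset.mul_sum, ← Finset.sum_add_distrib]
    apply Finset.sum_le_sum
    intro j _
    have : w j + α * d j = (1 - α) * w j + α * (w j + d j) := by ring
    rw [this]
    calc |(1 - α) * w j + α * (w j + d j)| ≤ |(1 - α) * w j| + |α * (w j + d j)| := abs_add_le _ _
      _ = (1 - α) * |w j| + α * |w j + d j| := by
          rw [abs_mul, abs_mul, abs_of_nonneg (by linarith), abs_of_nonneg (le_of_lt hα0)]
  -- descent bound
  have hdesc := descent_bound M hM L g hg hLip w d α (le_of_lt hα0)
  -- quadratic term control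
  have hquad : M * α ^ 2 * ‖d‖ ^ 2 ≤ (σ - 1) * α * Δ := by
    have h1 : α * (M * ‖d‖ ^ 2 + 1) ≤ (1 - σ) * (-Δ) := by
      rw [← le_div_iff₀ hdenom]; exact hαle2
    nlinarith [sq_nonneg α, mul_pos hα0 hα0]
  calc lam * ∑ j, |w j + α * d j| + L (w + α • d)
      ≤ lam * ((1 - α) * ∑ j, |w j| + α * ∑ j, |w j + d j|)
        + (L w + α * (inner ℝ (g w) d : ℝ) + M * α ^ 2 * ‖d‖ ^ 2) := by
        have := mul_le_mul_of_nonneg_left hl1 (le_of_lt hlam)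
        linarith
    _ = lam * ∑ j, |w j| + L w + α * Δ + M * α ^ 2 * ‖d‖ ^ 2 := by
        rw [hΔdef]; ring
    _ ≤ lam * ∑ j, |w j| + L w + σ * α * Δ := by nlinarith
end
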